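/- Let A ∈ ℝ^{n×n} and let x, z ∈ ℝⁿ satisfy A x = 0, zᵀ A = 0ᵀ, and zᵀ x = 1. Then for every θ ∈ ℝ, exp(A + θ x zᵀ) = exp(A) + (e^θ − 1) x zᵀ. -/

import Mathlib

open Matrix

open NormedSpace in
lemma exp_mul_of_mul_eq_zero {𝔸 : Type*} [NormedRing 𝔸] [NormedAlgebra ℝ 𝔸]
    [CompleteSpace 𝔸] {a b : 𝔸} (h : a * b = 0) : exp a * b = b := by
  rw [exp_eq_tsum ℝ, ← (expSeries_summable' (𝕂 := ℝ) a).tsum_mul_right b]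
  have key : ∀ n : ℕ, (((Nat.factorial n : ℝ))⁻¹ • a ^ n) * b = if n = 0 then b else 0 := by
    intro n
    cases n with
    | zero => simp
    | succ m =>
      simp [pow_succ, mul_assoc, h, smul_mul_assoc]
  simp_rw [key]
  exact tsum_eq_single 0 (by intro n hn; simp [hn]) |>.trans (by simp)

open NormedSpace in
lemma exp_smul_idem {𝔸 : Type*} [NormedRing 𝔸] [NormedAlgebra ℝ 𝔸]
    [CompleteSpace 𝔸] {p : 𝔸} (hp : p * p = p) (θ : ℝ) :
    exp (θ • p) = 1 + (Real.exp θ - 1) • p := by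
  have hpow : ∀ n : ℕ, p ^ (n + 1) = p := by
    intro n
    induction n with
    | zero => simp
    | succ m ih => rw [pow_succ, ih, hp]
  have hsum : Summable fun n : ℕ => ((Nat.factorial n : ℝ))⁻¹ • (θ • p) ^ n :=
    expSeries_summable' (𝕂 := ℝ) (θ • p)
  simp only [exp_eq_tsum ℝ]
  rw [hsum.tsum_eq_zero_add]
  have h1 : ∀ n : ℕ, ((Nat.factorial (n + 1) : ℝ))⁻¹ • (θ • p) ^ (n + 1)
      = (θ ^ (n + 1) / (Nat.factorial (n + 1) : ℝ)) • p := by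
    intro n
    rw [smul_pow, hpow, smul_smul]
    ring_nf
  simp_rw [h1]
  have hs : Summable fun n : ℕ => θ ^ n / (Nat.factorial n : ℝ) :=
    Real.summable_pow_div_factorial θ
  have hs1 : Summable fun n : ℕ => θ ^ (n + 1) / (Nat.factorial (n + 1) : ℝ) :=
    hs.comp_injective (add_left_injective 1)
  rw [hs1.tsum_smul_const]
  have hθ : ∑' n : ℕ, θ ^ (n + 1) / (Nat.factorial (n + 1) : ℝ) = Real.exp θ - 1 := by
    have h2 := hs.tsum_eq_zero_add
    have hexp : Real.exp θ = ∑' m : ℕ, θ ^ m / (Nat.factorial m : ℝ) := by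
      rw [Real.exp_eq_exp_ℝ, NormedSpace.exp_eq_tsum_div]
    rw [hexp, h2]
    simp
  rw [hθ]
  simp

open NormedSpace in
lemma matrix_exp_mul_of_mul_eq_zero {n : ℕ} {A B : Matrix (Fin n) (Fin n) ℝ}
    (h : A * B = 0) : exp A * B = B := by
  letI : SeminormedRing (Matrix (Fin n) (Fin n) ℝ) := Matrix.linftyOpSemiNormedRing
  letI : NormedRing (Matrix (Fin n) (Fin n) ℝ) := Matrix.linftyOpNormedRing
  letI : NormedAlgebra ℝ (Matrix (Fin n) (Fin n) ℝ) := Matrix.linftyOpNormedAlgebra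
  exact exp_mul_of_mul_eq_zero h

open NormedSpace in
lemma matrix_exp_smul_idem {n : ℕ} {P : Matrix (Fin n) (Fin n) ℝ}
    (hp : P * P = P) (θ : ℝ) : exp (θ • P) = 1 + (Real.exp θ - 1) • P := by
  letI : SeminormedRing (Matrix (Fin n) (Fin n) ℝ) := Matrix.linftyOpSemiNormedRing
  letI : NormedRing (Matrix (Fin n) (Fin n) ℝ) := Matrix.linftyOpNormedRing
  letI : NormedAlgebra ℝ (Matrix (Fin n) (Fin n) ℝ) := Matrix.linftyOpNormedAlgebra
  exact exp_smul_idem hp θ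

/-- Rank-one shift identity for the matrix exponential: if `A x = 0`, `zᵀ A = 0` and
`zᵀ x = 1`, then `exp (A + θ x zᵀ) = exp A + (e^θ - 1) x zᵀ`. -/
theorem rank_one_shift_exp {n : ℕ}
    (A : Matrix (Fin n) (Fin n) ℝ) (x z : Fin n → ℝ)
    (hx : A *ᵥ x = 0) (hz : z ᵥ* A = 0) (hzx : z ⬝ᵥ x = 1)
    (θ : ℝ) :
    NormedSpace.exp (A + θ • Matrix.vecMulVec x z)
      = NormedSpace.exp A + (Real.exp θ - 1) • Matrix.vecMulVec x z := by
  set P := Matrix.vecMulVec x z with hP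
  have hAP : A * P = 0 := by
    ext i j
    simp only [hP, mul_apply, vecMulVec_apply, Matrix.zero_apply]
    have h0 : (A *ᵥ x) i = 0 := by rw [hx]; rfl
    simp only [mulVec, dotProduct] at h0
    calc ∑ k, A i k * (x k * z j) = (∑ k, A i k * x k) * z j := by
          rw [Finset.sum_mul]; congr 1; ext k; ring
      _ = 0 := by rw [h0, zero_mul]
  have hPA : P * A = 0 := by
    ext i j
    simp only [hP, mul_apply, vecMulVec_apply, Matrix.zero_apply]
    have h0 : (z ᵥ* A) j = 0 := by rw [hz]; rfl
    simp only [vecMul, dotProduct] at h0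
    calc ∑ k, x i * z k * A k j = x i * ∑ k, z k * A k j := by
          rw [Finset.mul_sum]; congr 1; ext k; ring
      _ = 0 := by rw [h0, mul_zero]
  have hPP : P * P = P := by
    ext i j
    simp only [hP, mul_apply, vecMulVec_apply]
    have h1 : ∑ k, x i * z k * (x k * z j) = x i * (∑ k, z k * x k) * z j := by
      rw [Finset.mul_sum, Finset.sum_mul]; congr 1; ext k; ring
    rw [h1]
    have h2 : ∑ k, z k * x k = 1 := hzx
    rw [h2, mul_one]
  have hcomm : Commute A (θ • P) := by
    unfold Commute SemiconjBy
    rw [mul_smul_comm, smul_mul_assoc, hAP, hPA]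
  rw [Matrix.exp_add_of_commute A (θ • P) hcomm, matrix_exp_smul_idem hPP]
  rw [mul_add, mul_one, mul_smul_comm, matrix_exp_mul_of_mul_eq_zero hAP]
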